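/- (Theorem 1) Let t be a real number with t < 0 and let F(x) = 1/(e^{x(t-1)} - t) for x ∈ ℝ. Then for every N ∈ ℕ and every real x, the N-th derivative of F satisfies (d/dx)^N F(x) = (1-t)^N · Σ_{i=1}^{N+1} a_{i-1}(N,t) · F(x)^i. -/

import Mathlib

/-- The coefficients `a i N t` defined by `a 0 N t = 1` and, for `1 ≤ i ≤ N`,
`a i N t = i * t * ∑_{j=0}^{N-i} (i+1)^j * a (i-1) (N-j-1) t`. -/
noncomputable def eulerianCoeff : ℕ → ℕ → ℝ → ℝ
  | 0, _, _ => 1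
  | (i + 1), N, t =>
      ((i : ℝ) + 1) * t *
        ∑ j ∈ Finset.range (N - (i + 1) + 1),
          ((i : ℝ) + 2) ^ j * eulerianCoeff i (N - j - 1) t

lemma icc_range (n : ℕ) (f : ℕ → ℝ) :
    ∑ i ∈ Finset.Icc 1 (n+1), f i = ∑ k ∈ Finset.range (n+1), f (k+1) := by
  rw [← Finset.Ico_add_one_right_eq_Icc, Finset.sum_Ico_eq_sum_range]
  simp [add_comm]

lemma euler_rec (k N : ℕ) (t : ℝ) (h : k ≤ N) :
    eulerianCoeff k (N+1) t
      = ((k:ℝ)+1) * eulerianCoeff k N t + (k:ℝ) * t * eulerianCoeff (k-1) N t := by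
  cases k with
  | zero => simp [eulerianCoeff]
  | succ k =>
    show eulerianCoeff (k+1) (N+1) t = _
    rw [eulerianCoeff, eulerianCoeff]
    have h1 : N + 1 - (k + 1) + 1 = (N - (k+1)) + 1 + 1 := by omega
    have h2 : ∀ j, N + 1 - j - 1 = N - j := by intro j; omega
    have h3 : N - (k + 1) + 1 = N - k := by omega
    rw [h1, h3, Finset.sum_range_succ']
    simp only [h2, Nat.sub_sub, pow_zero, one_mul, Nat.sub_zero]
    push_cast
    rw [mul_add]
    congr 1
    rw [Finset.mul_sum, Finset.mul_sum, Finset.mul_sum]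
    exact Finset.sum_congr rfl fun i _ => by ring

lemma euler_top (N : ℕ) (t : ℝ) :
    eulerianCoeff (N+1) (N+1) t = ((N:ℝ)+1) * t * eulerianCoeff N N t := by
  rw [eulerianCoeff]
  have : N + 1 - (N + 1) + 1 = 1 := by omega
  rw [this]
  simp

lemma euler_key (N : ℕ) (t y : ℝ) :
    ∑ k ∈ Finset.range (N+2), eulerianCoeff k (N+1) t * y^(k+1)
      = ∑ k ∈ Finset.range (N+1),
          eulerianCoeff k N t * (((k:ℝ)+1) * (y^(k+1) + t * y^(k+2))) := by
  rw [Finset.sum_range_succ]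
  have hL : ∀ k ∈ Finset.range (N+1), eulerianCoeff k (N+1) t * y^(k+1)
      = (((k:ℝ)+1) * eulerianCoeff k N t + (k:ℝ) * t * eulerianCoeff (k-1) N t) * y^(k+1) := by
    intro k hk
    rw [euler_rec k N t (by simpa using Nat.lt_succ_iff.mp (Finset.mem_range.mp hk))]
  rw [Finset.sum_congr rfl hL, euler_top]
  -- RHS: split
  have hR : ∀ k ∈ Finset.range (N+1),
      eulerianCoeff k N t * (((k:ℝ)+1) * (y^(k+1) + t * y^(k+2)))
      = ((k:ℝ)+1) * eulerianCoeff k N t * y^(k+1)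
        + (((k:ℝ)+1) * t * eulerianCoeff k N t * y^(k+2)) := fun k _ => by ring
  rw [Finset.sum_congr rfl hR, Finset.sum_add_distrib]
  -- reindex second sum: g m = m * t * a_(m-1) N * y^(m+1)
  have hg : ∑ k ∈ Finset.range (N+1), ((k:ℝ)+1) * t * eulerianCoeff k N t * y^(k+2)
      = ∑ k ∈ Finset.range (N+1), ((k:ℝ) * t * eulerianCoeff (k-1) N t * y^(k+1))
        + ((N:ℝ)+1) * t * eulerianCoeff N N t * y^(N+2) := by
    have := Finset.sum_range_succ' (fun m => (m:ℝ) * t * eulerianCoeff (m-1) N t * y^(m+1)) (N+1)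
    rw [Finset.sum_range_succ] at this
    simp only [Nat.cast_zero, zero_mul, add_zero, Nat.add_sub_cancel, Nat.cast_add,
      Nat.cast_one] at this
    rw [← this]
  rw [hg, ← add_assoc, ← Finset.sum_add_distrib]
  congr 1
  · exact Finset.sum_congr rfl fun k _ => by ring

lemma F_hasDerivAt (t : ℝ) (ht : t < 0) (F : ℝ → ℝ)
    (hF : F = fun x => 1 / (Real.exp (x * (t - 1)) - t)) (x : ℝ) :
    HasDerivAt F ((1 - t) * (F x + t * F x ^ 2)) x := by
  have hden : ∀ y : ℝ, Real.exp (y * (t - 1)) - t ≠ 0 := fun y =>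
    ne_of_gt (by have := Real.exp_pos (y * (t - 1)); linarith)
  have h1 : HasDerivAt (fun y : ℝ => y * (t - 1)) (t - 1) x := by
    simpa using (hasDerivAt_id x).mul_const (t - 1)
  have h4 := ((h1.exp).sub_const t).fun_inv (hden x)
  rw [hF]
  simp only [one_div]
  refine h4.congr_deriv ?_
  have h := hden x
  field_simp
  ring

theorem eulerian_nth_deriv (t : ℝ) (ht : t < 0)
    (F : ℝ → ℝ) (hF : F = fun x => 1 / (Real.exp (x * (t - 1)) - t)) :
    ∀ (N : ℕ) (x : ℝ), iteratedDeriv N F x =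
      (1 - t) ^ N * ∑ i ∈ Finset.Icc 1 (N + 1), eulerianCoeff (i - 1) N t * (F x) ^ i := by
  intro N
  induction N with
  | zero =>
    intro x
    simp [iteratedDeriv_zero, eulerianCoeff]
  | succ N IH =>
    intro x
    rw [iteratedDeriv_succ]
    have hIH : iteratedDeriv N F = fun y =>
        (1 - t) ^ N * ∑ i ∈ Finset.Icc 1 (N + 1), eulerianCoeff (i - 1) N t * F y ^ i :=
      funext IH
    rw [hIH]
    have hd : HasDerivAt (fun y =>
        (1 - t) ^ N * ∑ i ∈ Finset.Icc 1 (N + 1), eulerianCoeff (i - 1) N t * F y ^ i)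
        ((1 - t) ^ N * ∑ i ∈ Finset.Icc 1 (N + 1), eulerianCoeff (i - 1) N t *
          ((i : ℝ) * F x ^ (i - 1) * ((1 - t) * (F x + t * F x ^ 2)))) x :=
      HasDerivAt.const_mul _ (HasDerivAt.fun_sum fun i _ =>
        ((F_hasDerivAt t ht F hF x).pow i).const_mul _)
    rw [hd.deriv]
    rw [icc_range N (fun i => eulerianCoeff (i - 1) N t *
          ((i : ℝ) * F x ^ (i - 1) * ((1 - t) * (F x + t * F x ^ 2)))),
        icc_range (N + 1) (fun i => eulerianCoeff (i - 1) (N + 1) t * F x ^ i)]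
    simp only [Nat.add_sub_cancel]
    rw [euler_key N t (F x), pow_succ, Finset.mul_sum, Finset.mul_sum]
    exact Finset.sum_congr rfl fun k _ => by push_cast; ring
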